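/- Let Ω be a locally compact separable metric space and m : BC(Ω) → ℂ a mean (positive linear functional with m(1) = 1). Let m₀ be the positive Borel measure representing m on C_c(Ω). If m(∞) := 1 − sup{m(f) : f ∈ C_c⁺(Ω), f ≤ 1} equals 0, then m(f) = ∫ f dm₀ for every f ∈ BC(Ω). -/

import Mathlib

open MeasureTheory BoundedContinuousFunction

noncomputable def reBC {Ω : Type*} [TopologicalSpace Ω] (f : Ω →ᵇ ℂ) : Ω →ᵇ ℂ :=
  ofNormedAddCommGroup (fun x => ((f x).re : ℂ))
    (Complex.continuous_ofReal.comp (Complex.continuous_re.comp f.continuous)) ‖f‖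
    (fun x => by
      simpa using (Complex.abs_re_le_norm (f x)).trans (f.norm_coe_le_norm x))

@[simp] lemma reBC_apply {Ω : Type*} [TopologicalSpace Ω] (f : Ω →ᵇ ℂ) (x : Ω) :
    reBC f x = ((f x).re : ℂ) := rfl

noncomputable def imBC {Ω : Type*} [TopologicalSpace Ω] (f : Ω →ᵇ ℂ) : Ω →ᵇ ℂ :=
  ofNormedAddCommGroup (fun x => ((f x).im : ℂ))
    (Complex.continuous_ofReal.comp (Complex.continuous_im.comp f.continuous)) ‖f‖
    (fun x => by
      simpa using (Complex.abs_im_le_norm (f x)).trans (f.norm_coe_le_norm x))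

@[simp] lemma imBC_apply {Ω : Type*} [TopologicalSpace Ω] (f : Ω →ᵇ ℂ) (x : Ω) :
    imBC f x = ((f x).im : ℂ) := rfl

lemma reBC_add_I_smul_imBC {Ω : Type*} [TopologicalSpace Ω] (f : Ω →ᵇ ℂ) :
    reBC f + Complex.I • imBC f = f := by
  ext x
  simp only [coe_add, Pi.add_apply, coe_smul, Pi.smul_apply, reBC_apply, imBC_apply, smul_eq_mul]
  rw [mul_comm]
  exact Complex.re_add_im (f x)

/-- `f` is a continuous compactly supported function with `0 ≤ f ≤ 1` (viewed inside
the complex-valued bounded continuous functions). -/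
def CcPosLeOne {α : Type*} [TopologicalSpace α] (f : α →ᵇ ℂ) : Prop :=
  HasCompactSupport ⇑f ∧ ∀ x, (f x).im = 0 ∧ 0 ≤ (f x).re ∧ (f x).re ≤ 1

/-- Let `Ω` be a locally compact separable metric space and `m : BC(Ω) → ℂ` a mean
(positive linear functional with `m(1) = 1`), with representing Borel measure `m₀` on
`C_c(Ω)`.  If `m(∞) := 1 − sup{m(f) : f ∈ C_c⁺(Ω), f ≤ 1} = 0`, then
`m(f) = ∫ f dm₀` for every `f ∈ BC(Ω)`. -/
theorem stmt14 {Ω : Type*} [MetricSpace Ω] [LocallyCompactSpace Ω]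
    [TopologicalSpace.SeparableSpace Ω] [MeasurableSpace Ω] [BorelSpace Ω]
    (m : (Ω →ᵇ ℂ) →ₗ[ℂ] ℂ)
    (hpos : ∀ f : Ω →ᵇ ℂ, (∀ x, (f x).im = 0 ∧ 0 ≤ (f x).re) →
      (m f).im = 0 ∧ 0 ≤ (m f).re)
    (hone : m (const Ω (1 : ℂ)) = 1)
    (m₀ : Measure Ω)
    (hrep : ∀ f : Ω →ᵇ ℂ, HasCompactSupport ⇑f → m f = ∫ x, f x ∂m₀)
    (hminf : sSup {r : ℝ | ∃ f : Ω →ᵇ ℂ, CcPosLeOne f ∧ r = (m f).re} = 1) :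
    ∀ f : Ω →ᵇ ℂ, m f = ∫ x, f x ∂m₀ := by
  -- `m` is real on real functions
  have mreal : ∀ f : Ω →ᵇ ℂ, (∀ x, (f x).im = 0) → (m f).im = 0 := by
    intro f hf
    have h := hpos (f + (‖f‖ : ℂ) • const Ω 1) (fun x => by
      constructor
      · simp [hf x]
      · have h1 : |(f x).re| ≤ ‖f‖ := (Complex.abs_re_le_norm (f x)).trans (f.norm_coe_le_norm x)
        have := neg_abs_le (f x).re
        simp only [coe_add, Pi.add_apply, coe_smul, const_apply, smul_eq_mul, mul_one,
          Complex.add_re, Complex.ofReal_re]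
        linarith)
    have e : m (f + (‖f‖ : ℂ) • const Ω 1) = m f + (‖f‖ : ℂ) := by
      rw [map_add, m.map_smul, hone, smul_eq_mul, mul_one]
    rw [e] at h
    simpa using h.1
  -- monotonicity on real functions
  have mono : ∀ f g : Ω →ᵇ ℂ, (∀ x, (f x).im = 0) → (∀ x, (g x).im = 0) →
      (∀ x, (f x).re ≤ (g x).re) → (m f).re ≤ (m g).re := by
    intro f g hf hg hle
    have h := hpos (g - f) (fun x => by
      constructor
      · simp [hf x, hg x]
      · simp only [coe_sub, Pi.sub_apply, Complex.sub_re, sub_nonneg]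
        exact hle x)
    rw [map_sub] at h
    have := h.2
    simp only [Complex.sub_re, sub_nonneg] at this
    exact this
  -- key estimate: `‖m h‖ ≤ m u` when `‖h‖ ≤ u` pointwise, `u` real
  have key : ∀ h u : Ω →ᵇ ℂ, (∀ x, (u x).im = 0) → (∀ x, ‖h x‖ ≤ (u x).re) →
      ‖m h‖ ≤ (m u).re := by
    intro h u hu hle
    have hu0 : 0 ≤ (m u).re :=
      (hpos u (fun x => ⟨hu x, (norm_nonneg (h x)).trans (hle x)⟩)).2
    by_cases h0 : m h = 0
    · simp [h0, hu0]
    have hn0 : ‖m h‖ ≠ 0 := norm_ne_zero_iff.mpr h0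
    set c : ℂ := (starRingEnd ℂ) (m h) / (‖m h‖ : ℂ) with hc
    have hcn : ‖c‖ = 1 := by
      rw [hc, norm_div, RCLike.norm_conj]
      rw [Complex.norm_real, norm_norm]
      exact div_self hn0
    have hch : m (c • h) = (‖m h‖ : ℂ) := by
      rw [m.map_smul, smul_eq_mul, hc, div_mul_eq_mul_div, mul_comm, Complex.mul_conj,
        Complex.normSq_eq_norm_sq]
      have hab : ((‖m h‖ : ℝ) : ℂ) ≠ 0 := by
        exact_mod_cast hn0
      rw [Complex.ofReal_pow, pow_two, mul_div_assoc, div_self hab, mul_one]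
    have hdec : m (c • h) = m (reBC (c • h)) + Complex.I * m (imBC (c • h)) := by
      conv_lhs => rw [← reBC_add_I_smul_imBC (c • h)]
      rw [map_add, m.map_smul, smul_eq_mul]
    have him : (m (imBC (c • h))).im = 0 := mreal _ (fun x => by simp)
    have hre' : (m (c • h)).re = (m (reBC (c • h))).re := by
      rw [hdec]
      simp [Complex.add_re, Complex.mul_re, him]
    have : ‖m h‖ = (m (reBC (c • h))).re := by
      rw [← hre', hch, Complex.ofReal_re]
    rw [this]
    refine mono _ _ (fun x => by simp) hu (fun x => ?_)
    simp only [reBC_apply, Complex.ofReal_re]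
    calc ((c • h) x).re ≤ ‖(c • h) x‖ := Complex.re_le_norm _
      _ = ‖h x‖ := by
          simp only [coe_smul, Pi.smul_apply, smul_eq_mul, norm_mul, hcn, one_mul]
      _ ≤ (u x).re := hle x
  -- good approximants
  have hgood : ∀ ε > (0:ℝ), ∃ g : Ω →ᵇ ℂ, CcPosLeOne g ∧ 1 - ε < (m g).re := by
    intro ε hε
    have hSne : {r : ℝ | ∃ f : Ω →ᵇ ℂ, CcPosLeOne f ∧ r = (m f).re}.Nonempty := by
      by_contra hc
      rw [Set.not_nonempty_iff_eq_empty] at hc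
      rw [hc, Real.sSup_empty] at hminf
      norm_num at hminf
    have hlt : 1 - ε < sSup {r : ℝ | ∃ f : Ω →ᵇ ℂ, CcPosLeOne f ∧ r = (m f).re} := by
      rw [hminf]; linarith
    obtain ⟨r, hrS, hr⟩ := exists_lt_of_lt_csSup hSne hlt
    obtain ⟨g, hg, rfl⟩ := hrS
    exact ⟨g, hg, hr⟩
  obtain ⟨g₀, hg₀c, hg₀m⟩ := hgood (1/2) (by norm_num)
  -- compact sets have measure at most 1
  have hK : ∀ K : Set Ω, IsCompact K → m₀ K ≤ 1 := by
    intro K hKc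
    obtain ⟨φ, hφ1, hφ0, hφc, hφ01⟩ :=
      exists_continuous_one_zero_of_isCompact (hKc.union hg₀c.1) isClosed_empty
        (Set.disjoint_empty _)
    set h : Ω →ᵇ ℂ := ofNormedAddCommGroup (fun x => ((φ x : ℝ) : ℂ))
      (Complex.continuous_ofReal.comp φ.continuous) 1
      (fun x => by
        rw [Complex.norm_real, Real.norm_eq_abs, abs_of_nonneg (hφ01 x).1]
        exact (hφ01 x).2) with hh
    have hhx : ∀ x, h x = ((φ x : ℝ) : ℂ) := fun x => rfl
    have hhc : HasCompactSupport ⇑h := by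
      have he : ⇑h = Complex.ofReal ∘ ⇑φ := rfl
      rw [he]
      exact hφc.comp_left Complex.ofReal_zero
    have hrh := hrep h hhc
    have hgh : ∀ x, (g₀ x).re ≤ (h x).re := by
      intro x
      rw [hhx x, Complex.ofReal_re]
      by_cases hx : x ∈ tsupport ⇑g₀
      · rw [show φ x = 1 from hφ1 (Set.mem_union_right _ hx)]
        exact (hg₀c.2 x).2.2
      · rw [image_eq_zero_of_notMem_tsupport hx]
        simpa using (hφ01 x).1
    have hmh : (1:ℝ)/2 < (m h).re := by
      have := mono g₀ h (fun x => (hg₀c.2 x).1) (fun x => by rw [hhx x]; simp) hgh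
      linarith
    have hne : m h ≠ 0 := by
      intro h0; rw [h0] at hmh; norm_num at hmh
    have hinth : Integrable (fun x => h x) m₀ := by
      by_contra hni
      rw [integral_undef hni] at hrh
      exact hne hrh
    have hintφ : Integrable (fun x => φ x) m₀ := by
      have := hinth.re
      simpa [hhx] using this
    have h2 : (∫ x, h x ∂m₀) = ((∫ x, φ x ∂m₀ : ℝ) : ℂ) := integral_ofReal
    have hφle1 : ∫ x, φ x ∂m₀ ≤ 1 := by
      have h1 : (m h).re ≤ (m (const Ω 1)).re :=
        mono h _ (fun x => by rw [hhx x]; simp) (fun x => by simp)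
          (fun x => by rw [hhx x]; simpa using (hφ01 x).2)
      rw [hone] at h1
      have h3 : (m h).re = ∫ x, φ x ∂m₀ := by rw [hrh, h2]; simp
      rw [← h3]; simpa using h1
    calc m₀ K = ∫⁻ _x in K, 1 ∂m₀ := (setLIntegral_one K).symm
      _ ≤ ∫⁻ x in K, ENNReal.ofReal (φ x) ∂m₀ := by
          refine setLIntegral_mono (by fun_prop) (fun x hx => ?_)
          rw [show φ x = 1 from hφ1 (Set.mem_union_left _ hx)]
          simp
      _ ≤ ∫⁻ x, ENNReal.ofReal (φ x) ∂m₀ := setLIntegral_le_lintegral _ _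
      _ = ENNReal.ofReal (∫ x, φ x ∂m₀) :=
          (ofReal_integral_eq_lintegral_ofReal hintφ (ae_of_all _ fun x => (hφ01 x).1)).symm
      _ ≤ 1 := by
          simpa using ENNReal.ofReal_le_ofReal hφle1
  haveI : SecondCountableTopology Ω := UniformSpace.secondCountable_of_separable Ω
  have hfin : m₀ Set.univ ≤ 1 := by
    have hcov : (Set.univ : Set Ω) = ⋃ n, compactCovering Ω n := (iUnion_compactCovering Ω).symm
    have hd : Directed (· ⊆ ·) (compactCovering Ω) := fun i j =>
      ⟨max i j, compactCovering_subset Ω (le_max_left i j),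
        compactCovering_subset Ω (le_max_right i j)⟩
    rw [hcov, hd.measure_iUnion]
    exact iSup_le fun n => hK _ (isCompact_compactCovering Ω n)
  haveI : IsFiniteMeasure m₀ := ⟨lt_of_le_of_lt hfin ENNReal.one_lt_top⟩
  intro f
  have hintf : Integrable (fun x => f x) m₀ := f.integrable m₀
  have main : ∀ ε > (0:ℝ), ‖m f - ∫ x, f x ∂m₀‖ ≤ ε := by
    intro ε hε
    set δ : ℝ := ε / (2 * ‖f‖ + 2) with hδ
    have hδpos : 0 < δ := div_pos hε (by positivity)
    obtain ⟨g, hgc, hgm⟩ := hgood δ hδpos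
    have hgim : ∀ x, (g x).im = 0 := fun x => (hgc.2 x).1
    have hfgc : HasCompactSupport ⇑(f * g) := by
      rw [coe_mul]
      exact hgc.1.mul_left
    have hrfg := hrep (f * g) hfgc
    set u : Ω →ᵇ ℂ := (‖f‖ : ℂ) • (const Ω 1 - g) with hu
    have hux : ∀ x, u x = (‖f‖ : ℂ) * (1 - g x) := fun x => rfl
    have huim : ∀ x, (u x).im = 0 := fun x => by
      rw [hux x]
      simp [Complex.mul_im, hgim x]
    have hure : ∀ x, (u x).re = ‖f‖ * (1 - (g x).re) := fun x => by
      rw [hux x]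
      simp [Complex.mul_re, hgim x]
    have hptw : ∀ x, ‖(f - f * g) x‖ ≤ (u x).re := by
      intro x
      rw [hure x]
      have he : (f - f * g) x = f x * (1 - g x) := by
        simp [mul_one_sub]
      have h1 : ‖(1 : ℂ) - g x‖ = 1 - (g x).re := by
        have he2 : (1 : ℂ) - g x = ((1 - (g x).re : ℝ) : ℂ) := by
          apply Complex.ext <;> simp [hgim x]
        rw [he2, Complex.norm_real, Real.norm_eq_abs, abs_of_nonneg]
        linarith [(hgc.2 x).2.2]
      rw [he, norm_mul, h1]
      have h2 : 0 ≤ 1 - (g x).re := by linarith [(hgc.2 x).2.2]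
      exact mul_le_mul_of_nonneg_right (f.norm_coe_le_norm x) h2
    have hA : ‖m (f - f * g)‖ ≤ ‖f‖ * δ := by
      refine (key _ u huim hptw).trans ?_
      have he : m u = (‖f‖ : ℂ) * (1 - m g) := by
        rw [hu, m.map_smul, map_sub, hone, smul_eq_mul]
      have hgre : (m g).im = 0 := mreal g hgim
      rw [he]
      have hre : ((‖f‖ : ℂ) * (1 - m g)).re = ‖f‖ * (1 - (m g).re) := by
        simp [Complex.mul_re, Complex.sub_re, Complex.sub_im, hgre]
      rw [hre]
      have h1 : 1 - (m g).re ≤ δ := by linarith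
      exact mul_le_mul_of_nonneg_left h1 (norm_nonneg f)
    have hintg : Integrable (fun x => g x) m₀ := g.integrable m₀
    have hintfg : Integrable (fun x => (f * g) x) m₀ := (f * g).integrable m₀
    have hintu : Integrable (fun x => u x) m₀ := u.integrable m₀
    have hgre_int : Integrable (fun x => (g x).re) m₀ := hintg.re
    have hgre2 : ∫ x, (g x).re ∂m₀ = (m g).re := by
      rw [hrep g hgc.1]
      exact integral_re hintg
    have htot : (m₀ Set.univ).toReal ≤ 1 := by
      have := ENNReal.toReal_mono ENNReal.one_ne_top hfin
      simpa using this
    have hB : ‖∫ x, (f - f * g) x ∂m₀‖ ≤ ‖f‖ * δ := by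
      calc ‖∫ x, (f - f * g) x ∂m₀‖ ≤ ∫ x, ‖(f - f * g) x‖ ∂m₀ :=
            norm_integral_le_integral_norm _
        _ ≤ ∫ x, (u x).re ∂m₀ := integral_mono ((hintf.sub hintfg).norm) hintu.re hptw
        _ = ‖f‖ * ((m₀ Set.univ).toReal - (m g).re) := by
            simp_rw [hure]
            rw [integral_const_mul, integral_sub (integrable_const 1) hgre_int,
              integral_const, hgre2]
            simp [measureReal_def]
        _ ≤ ‖f‖ * δ := by
            refine mul_le_mul_of_nonneg_left ?_ (norm_nonneg f)
            linarith
    have hsplit : m f - ∫ x, f x ∂m₀ = m (f - f * g) - ∫ x, (f - f * g) x ∂m₀ := by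
      rw [map_sub, hrfg]
      have : ∫ x, (f - f * g) x ∂m₀ = (∫ x, f x ∂m₀) - ∫ x, (f * g) x ∂m₀ := by
        simp_rw [coe_sub, Pi.sub_apply]
        exact integral_sub hintf hintfg
      rw [this]
      ring
    rw [hsplit]
    calc ‖m (f - f * g) - ∫ x, (f - f * g) x ∂m₀‖
        ≤ ‖m (f - f * g)‖ + ‖∫ x, (f - f * g) x ∂m₀‖ := norm_sub_le _ _
      _ ≤ ‖f‖ * δ + ‖f‖ * δ := add_le_add hA hB
      _ ≤ (2 * ‖f‖ + 2) * δ := by nlinarith [hδpos.le]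
      _ = ε := by
          rw [hδ]
          field_simp
  have hz : ‖m f - ∫ x, f x ∂m₀‖ ≤ 0 :=
    le_of_forall_pos_le_add (fun ε hε => by simpa using main ε hε)
  have := norm_le_zero_iff.mp hz
  exact sub_eq_zero.mp this
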